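/- Let H be a real Hilbert space, S ⊂ H a nonempty closed convex set, and 0 < τ̲ < τ̄ < 2. Let (p^k) be a sequence in H and, for each k, let φ_k(p) = ⟪g_k, p⟫ + c_k be an affine functional (g_k ∈ H, c_k ∈ ℝ) such that φ_k(p) ≤ 0 for all p ∈ S, and suppose that for each k: if φ_k(p^k) > 0 then p^{k+1} = p^k − τ_k (φ_k(p^k)/‖g_k‖²) g_k for some τ_k ∈ [τ̲, τ̄], and otherwise p^{k+1} = p^k. Then the sequence (p^k) is bounded. -/

import Mathlib

open scoped RealInnerProductSpace

/-- The iterates of the generic linear separation–projection method for finding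
a point in a nonempty closed convex set `S` form a bounded sequence. -/
theorem separation_projection_bounded {H : Type*} [NormedAddCommGroup H]
    [InnerProductSpace ℝ H] [CompleteSpace H]
    (S : Set H) (hSne : S.Nonempty) (hScl : IsClosed S) (hScv : Convex ℝ S)
    (τmin τmax : ℝ) (hτ0 : 0 < τmin) (hτ1 : τmin < τmax) (hτ2 : τmax < 2)
    (p : ℕ → H) (g : ℕ → H) (c : ℕ → ℝ)
    (hsep : ∀ k, ∀ q ∈ S, ⟪g k, q⟫ + c k ≤ 0)
    (hstep : ∀ k,
      (0 < ⟪g k, p k⟫ + c k →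
        ∃ τ ∈ Set.Icc τmin τmax,
          p (k + 1) = p k - ((τ * (⟪g k, p k⟫ + c k)) / ‖g k‖ ^ 2) • g k) ∧
      (⟪g k, p k⟫ + c k ≤ 0 → p (k + 1) = p k)) :
    ∃ M, ∀ k, ‖p k‖ ≤ M := by
  obtain ⟨q, hq⟩ := hSne
  have key : ∀ k, ‖p (k + 1) - q‖ ≤ ‖p k - q‖ := by
    intro k
    rcases le_or_gt (⟪g k, p k⟫ + c k) 0 with hle | hpos
    · rw [(hstep k).2 hle]
    · obtain ⟨τ, hτ, heq⟩ := (hstep k).1 hpos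
      set φ := ⟪g k, p k⟫ + c k with hφ
      have hgq := hsep k q hq
      have hinner : φ ≤ ⟪g k, p k - q⟫ := by
        rw [inner_sub_right]; linarith
      have hgne : g k ≠ 0 := by
        intro h
        rw [h, inner_zero_left] at hinner
        linarith
      have hg2 : (0:ℝ) < ‖g k‖ ^ 2 := pow_pos (norm_pos_iff.mpr hgne) 2
      set t : ℝ := τ * φ / ‖g k‖ ^ 2 with ht
      have ht0 : 0 ≤ t := by
        apply div_nonneg _ hg2.le
        exact mul_nonneg (le_of_lt (lt_of_lt_of_le hτ0 hτ.1)) hpos.le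
      have heq' : p (k + 1) - q = (p k - q) - t • g k := by
        rw [heq]; abel
      have hexp : ‖p (k + 1) - q‖ ^ 2
          = ‖p k - q‖ ^ 2 - 2 * (t * ⟪p k - q, g k⟫) + t ^ 2 * ‖g k‖ ^ 2 := by
        rw [heq', norm_sub_sq_real, real_inner_smul_right, norm_smul, mul_pow]
        simp [abs_of_nonneg ht0]
      have htg : t * ‖g k‖ ^ 2 = τ * φ := by
        rw [ht, div_mul_cancel₀ _ hg2.ne']
      have hsym : ⟪p k - q, g k⟫ = ⟪g k, p k - q⟫ := real_inner_comm _ _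
      have hquad : ‖p (k + 1) - q‖ ^ 2 ≤ ‖p k - q‖ ^ 2 + t * φ * (τ - 2) := by
        rw [hexp, hsym]
        have h1 : t * φ ≤ t * ⟪g k, p k - q⟫ := mul_le_mul_of_nonneg_left hinner ht0
        have h2 : t ^ 2 * ‖g k‖ ^ 2 = t * (τ * φ) := by
          rw [pow_two, mul_assoc, htg]
        nlinarith
      have hτ2' : τ - 2 < 0 := by
        have := hτ.2; linarith
      have hneg : t * φ * (τ - 2) ≤ 0 := by
        have : 0 ≤ t * φ := mul_nonneg ht0 hpos.le
        nlinarith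
      have hsq : ‖p (k + 1) - q‖ ^ 2 ≤ ‖p k - q‖ ^ 2 := by linarith
      nlinarith [norm_nonneg (p (k + 1) - q), norm_nonneg (p k - q)]
  have mono : ∀ k, ‖p k - q‖ ≤ ‖p 0 - q‖ := by
    intro k
    induction k with
    | zero => exact le_refl _
    | succ n ih => exact le_trans (key n) ih
  refine ⟨‖p 0 - q‖ + ‖q‖, fun k => ?_⟩
  calc ‖p k‖ = ‖(p k - q) + q‖ := by rw [sub_add_cancel]
    _ ≤ ‖p k - q‖ + ‖q‖ := norm_add_le _ _
    _ ≤ ‖p 0 - q‖ + ‖q‖ := by linarith [mono k]
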